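/- Let D be a non-Hamiltonian 2-strong digraph of order n such that n−1 of its vertices have degree at least n+1 and the remaining vertex z has degree at most n−2. Suppose C = x_1 x_2 … x_m z x_1, with 2 ≤ m ≤ n−3, is a longest directed cycle through z in D, the set Y = V(D) \ V(C) contains two distinct vertices y_1, y_2 that are mutually reachable in D⟨Y⟩ with d(y_i, {x_1, …, x_m}) = m+1 for each i ∈ {1,2}, and l is an integer with 2 ≤ l ≤ m−1 such that every vertex of {x_l, …, x_m} dominates both y_1 and y_2 and both y_1 and y_2 dominate every vertex of {x_1, …, x_l}. Set E = {x_1, …, x_{l−1}} and F = {x_{l+1}, …, x_m}. If some vertex of E dominates z, then z dominates no vertex of F. -/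

import Mathlib

set_option maxHeartbeats 2000000


/-! A digraph on a vertex type `V` is given by its arc relation `A : V → V → Prop`
(this automatically forbids multiple arcs); looplessness is expressed by the
hypothesis `Irreflexive A`. -/

/-- The degree of `x`: its out-degree plus its in-degree. -/
noncomputable def degree {V : Type*} (A : V → V → Prop) (x : V) : ℕ :=
  {y | A x y}.ncard + {y | A y x}.ncard

/-- `degreeIn A x S` is the number of arcs between `x` and vertices of `S`,
in both directions. -/
noncomputable def degreeIn {V : Type*} (A : V → V → Prop) (x : V) (S : Set V) : ℕ :=
  {y ∈ S | A x y}.ncard + {y ∈ S | A y x}.ncard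

/-- `c : Fin m → V` is a directed cycle of length `m` (indices taken mod `m`). -/
def IsCycle {V : Type*} (A : V → V → Prop) {m : ℕ} (c : Fin m → V) : Prop :=
  2 ≤ m ∧ Function.Injective c ∧
    ∀ i : Fin m, A (c i) (c ⟨(i.val + 1) % m, Nat.mod_lt _ i.pos⟩)

/-- `p : Fin m → V` is a directed path on `m` vertices (of length `m - 1`). -/
def IsPath {V : Type*} (A : V → V → Prop) {m : ℕ} (p : Fin m → V) : Prop :=
  Function.Injective p ∧ ∀ (i : Fin m) (h : i.val + 1 < m), A (p i) (p ⟨i.val + 1, h⟩)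

/-- A digraph is Hamiltonian if it has a directed cycle through all of its vertices. -/
def IsHamiltonian {V : Type*} [Fintype V] (A : V → V → Prop) : Prop :=
  ∃ c : Fin (Fintype.card V) → V, IsCycle A c ∧ Function.Surjective c

/-- Reachability by a directed path staying inside the set `S`. -/
def ReachIn {V : Type*} (A : V → V → Prop) (S : Set V) : V → V → Prop :=
  Relation.ReflTransGen (fun u v => u ∈ S ∧ v ∈ S ∧ A u v)

/-- A digraph is strong if every vertex is reachable from every other by a directed path. -/
def IsStrong {V : Type*} (A : V → V → Prop) : Prop :=
  ∀ x y : V, Relation.ReflTransGen A x y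

/-- A digraph is `k`-strong if it has at least `k + 1` vertices and the deletion of
any set of at most `k - 1` vertices leaves a strong digraph. -/
def IsKStrong {V : Type*} [Fintype V] (A : V → V → Prop) (k : ℕ) : Prop :=
  k + 1 ≤ Fintype.card V ∧
    ∀ S : Set V, S.ncard ≤ k - 1 → ∀ x ∈ Sᶜ, ∀ y ∈ Sᶜ, ReachIn A Sᶜ x y

/-- Auxiliary: the vertex sequence of the long cycle used in the proof below. -/
noncomputable def gAux {V : Type*} (z y₁ y₂ : V) (x' : ℕ → V) (m I J : ℕ) (p : ℕ) : V :=
  if p = 0 then z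
  else if p ≤ m - J then x' (J + p - 1)
  else if p = m - J + 1 then y₂
  else if p ≤ m - I then x' (p + I + J - m - 1)
  else if p = m - I + 1 then y₁
  else x' (p + I - m - 2)

/-- Claim 1(i): in the situation of Lemma 4 with `l` as in (1), set
`E = {x₁, …, x_{l-1}}` (indices `≤ l - 2` in `Fin m`) and `F = {x_{l+1}, …, x_m}`
(indices `≥ l` in `Fin m`).  If some vertex of `E` dominates `z`, then `z` dominates
no vertex of `F`. -/
theorem statement13 {V : Type*} [Fintype V] [DecidableEq V] (A : V → V → Prop)
    (hirr : Irreflexive A)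
    (n : ℕ) (hcard : Fintype.card V = n)
    (h2strong : IsKStrong A 2)
    (hnonham : ¬ IsHamiltonian A)
    (z : V)
    (hdeg : ∀ v : V, v ≠ z → n + 1 ≤ degree A v)
    (hdegz : degree A z ≤ n - 2)
    (m : ℕ) (hm2 : 2 ≤ m) (hmn : m ≤ n - 3)
    -- the cycle C = x₁ x₂ … x_m z x₁ of length m + 1 through z
    (x : Fin m → V) (hxinj : Function.Injective x) (hzx : z ∉ Set.range x)
    (harc : ∀ (i : Fin m) (h : i.val + 1 < m), A (x i) (x ⟨i.val + 1, h⟩))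
    (harcz1 : A (x ⟨m - 1, by omega⟩) z)
    (harcz2 : A z (x ⟨0, by omega⟩))
    -- C is a longest cycle through z
    (hlongest : ∀ (r : ℕ) (c : Fin r → V), IsCycle A c → z ∈ Set.range c → r ≤ m + 1)
    (Y : Set V) (hY : Y = (Set.range x ∪ {z})ᶜ)
    (y₁ y₂ : V) (hy₁ : y₁ ∈ Y) (hy₂ : y₂ ∈ Y) (hyne : y₁ ≠ y₂)
    -- y₁ and y₂ are mutually reachable in D⟨Y⟩
    (hreach₁ : ReachIn A Y y₁ y₂) (hreach₂ : ReachIn A Y y₂ y₁)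
    (hdy₁ : degreeIn A y₁ (Set.range x) = m + 1)
    (hdy₂ : degreeIn A y₂ (Set.range x) = m + 1)
    (l : ℕ) (hl2 : 2 ≤ l) (hlm : l ≤ m - 1)
    (hdom₁ : ∀ i : Fin m, l - 1 ≤ i.val → A (x i) y₁ ∧ A (x i) y₂)
    (hdom₂ : ∀ i : Fin m, i.val ≤ l - 1 → A y₁ (x i) ∧ A y₂ (x i))
    (hEz : ∃ i : Fin m, i.val ≤ l - 2 ∧ A (x i) z) :
    ∀ j : Fin m, l ≤ j.val → ¬ A z (x j) := by
  intro j hj hAzxj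
  obtain ⟨i, hi, hAxiz⟩ := hEz
  have hm0 : 0 < m := by omega
  set I := i.val with hIdef
  set J := j.val with hJdef
  have hJm : J < m := j.isLt
  have hIJ : I + 2 ≤ J := by omega
  set x' : ℕ → V := fun t => x ⟨t % m, Nat.mod_lt _ hm0⟩ with hx'def
  have hx'eq : ∀ t (ht : t < m), x' t = x ⟨t, ht⟩ := by
    intro t ht
    simp only [hx'def]
    congr 1
    exact Fin.ext (Nat.mod_eq_of_lt ht)
  have hx'inj : ∀ a, a < m → ∀ b, b < m → x' a = x' b → a = b := by
    intro a ha b hb h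
    rw [hx'eq a ha, hx'eq b hb] at h
    simpa using congrArg Fin.val (hxinj h)
  have hy₁' := hy₁
  have hy₂' := hy₂
  rw [hY, Set.mem_compl_iff, Set.mem_union] at hy₁' hy₂'
  push_neg at hy₁' hy₂'
  obtain ⟨hy₁x, hy₁z⟩ := hy₁'
  obtain ⟨hy₂x, hy₂z⟩ := hy₂'
  rw [Set.mem_singleton_iff] at hy₁z hy₂z
  have hx'z : ∀ t, x' t ≠ z := fun t h => hzx (h ▸ Set.mem_range_self _)
  have hx'y₁ : ∀ t, x' t ≠ y₁ := fun t h => hy₁x (h ▸ Set.mem_range_self _)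
  have hx'y₂ : ∀ t, x' t ≠ y₂ := fun t h => hy₂x (h ▸ Set.mem_range_self _)
  have hx'arc : ∀ t, t + 1 < m → A (x' t) (x' (t + 1)) := by
    intro t ht
    rw [hx'eq t (by omega), hx'eq (t + 1) ht]
    exact harc ⟨t, by omega⟩ ht
  have hd1y₁ : ∀ t, l - 1 ≤ t → ∀ ht : t < m, A (x' t) y₁ := by
    intro t h ht; rw [hx'eq t ht]; exact (hdom₁ ⟨t, ht⟩ h).1
  have hd1y₂ : ∀ t, l - 1 ≤ t → ∀ ht : t < m, A (x' t) y₂ := by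
    intro t h ht; rw [hx'eq t ht]; exact (hdom₁ ⟨t, ht⟩ h).2
  have hd2y₁ : ∀ t, t ≤ l - 1 → ∀ ht : t < m, A y₁ (x' t) := by
    intro t h ht; rw [hx'eq t ht]; exact (hdom₂ ⟨t, ht⟩ h).1
  have hd2y₂ : ∀ t, t ≤ l - 1 → ∀ ht : t < m, A y₂ (x' t) := by
    intro t h ht; rw [hx'eq t ht]; exact (hdom₂ ⟨t, ht⟩ h).2
  set g : ℕ → V := gAux z y₁ y₂ x' m I J with hgdef
  -- evaluation lemmas
  have g0 : g 0 = z := by simp [hgdef, gAux]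
  have g2 : ∀ p, 1 ≤ p → p ≤ m - J → g p = x' (J + p - 1) := by
    intro p h1 h2
    simp only [hgdef, gAux]
    rw [if_neg (by omega), if_pos h2]
  have g3 : g (m - J + 1) = y₂ := by
    have h1 : ¬(m - J + 1 = 0) := by omega
    have h2 : ¬(m - J + 1 ≤ m - J) := by omega
    simp [hgdef, gAux, h1, h2]
  have g4 : ∀ p, m - J + 2 ≤ p → p ≤ m - I → g p = x' (p + I + J - m - 1) := by
    intro p h1 h2
    simp only [hgdef, gAux]
    rw [if_neg (by omega), if_neg (by omega), if_neg (by omega), if_pos h2]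
  have g5 : g (m - I + 1) = y₁ := by
    have h1 : ¬(m - I + 1 = 0) := by omega
    have h2 : ¬(m - I + 1 ≤ m - J) := by omega
    have h3 : ¬(m - I + 1 = m - J + 1) := by omega
    have h4 : ¬(m - I + 1 ≤ m - I) := by omega
    have h5 : ¬(m - I = m - J) := by omega
    simp [hgdef, gAux, h1, h2, h3, h4, h5]
  have g6 : ∀ p, m - I + 2 ≤ p → g p = x' (p + I - m - 2) := by
    intro p h1
    simp only [hgdef, gAux]
    rw [if_neg (by omega), if_neg (by omega), if_neg (by omega), if_neg (by omega),
      if_neg (by omega)]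
  -- injectivity
  have hginj : ∀ p, p < m + 3 → ∀ q, q < m + 3 → g p = g q → p = q := by
    intro p hp q hq h
    simp only [hgdef, gAux] at h
    split_ifs at h <;>
      first
      | omega
      | (exact absurd h (hx'z _))
      | (exact absurd h.symm (hx'z _))
      | (exact absurd h (hx'y₁ _))
      | (exact absurd h.symm (hx'y₁ _))
      | (exact absurd h (hx'y₂ _))
      | (exact absurd h.symm (hx'y₂ _))
      | (exact absurd h hyne)
      | (exact absurd h.symm hyne)
      | (exact absurd h.symm hy₁z)
      | (exact absurd h hy₁z)
      | (exact absurd h.symm hy₂z)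
      | (exact absurd h hy₂z)
      | (have := hx'inj _ (by omega) _ (by omega) h; omega)
  -- arcs
  have hgarc : ∀ p, p < m + 3 → A (g p) (g ((p + 1) % (m + 3))) := by
    intro p hp
    rcases eq_or_ne p (m + 2) with h | hne
    · subst h
      rw [show (m + 2 + 1) % (m + 3) = 0 from Nat.mod_self _, g0,
        g6 (m + 2) (by omega), show m + 2 + I - m - 2 = I from by omega,
        hx'eq I (by omega), show (⟨I, by omega⟩ : Fin m) = i from Fin.ext rfl]
      exact hAxiz
    · rw [Nat.mod_eq_of_lt (by omega)]
      rcases eq_or_ne p 0 with h0 | h0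
      · subst h0
        rw [g0, g2 1 le_rfl (by omega), show J + 1 - 1 = J from by omega,
          hx'eq J hJm, show (⟨J, hJm⟩ : Fin m) = j from Fin.ext rfl]
        exact hAzxj
      · rcases lt_or_ge p (m - J) with h1 | h1
        · rw [g2 p (by omega) (by omega), g2 (p + 1) (by omega) (by omega),
            show J + (p + 1) - 1 = (J + p - 1) + 1 from by omega]
          exact hx'arc _ (by omega)
        · rcases eq_or_ne p (m - J) with h2 | h2
          · rw [g2 p (by omega) (by omega), show p + 1 = m - J + 1 from by omega, g3,
              show J + p - 1 = m - 1 from by omega]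
            exact hd1y₂ (m - 1) (by omega) (by omega)
          · rcases eq_or_ne p (m - J + 1) with h3 | h3
            · rw [h3, g3, g4 (m - J + 1 + 1) (by omega) (by omega),
                show m - J + 1 + 1 + I + J - m - 1 = I + 1 from by omega]
              exact hd2y₂ (I + 1) (by omega) (by omega)
            · rcases lt_or_ge p (m - I) with h4 | h4
              · rw [g4 p (by omega) (by omega), g4 (p + 1) (by omega) (by omega),
                  show p + 1 + I + J - m - 1 = (p + I + J - m - 1) + 1 from by omega]
                exact hx'arc _ (by omega)
              · rcases eq_or_ne p (m - I) with h5 | h5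
                · rw [g4 p (by omega) (by omega), show p + 1 = m - I + 1 from by omega,
                    g5, show p + I + J - m - 1 = J - 1 from by omega]
                  exact hd1y₁ (J - 1) (by omega) (by omega)
                · rcases eq_or_ne p (m - I + 1) with h6 | h6
                  · rw [h6, g5, g6 (m - I + 1 + 1) (by omega),
                      show m - I + 1 + 1 + I - m - 2 = 0 from by omega]
                    exact hd2y₁ 0 (by omega) (by omega)
                  · rw [g6 p (by omega), g6 (p + 1) (by omega),
                      show p + 1 + I - m - 2 = (p + I - m - 2) + 1 from by omega]
                    exact hx'arc _ (by omega)
  -- the long cycle contradicts maximality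
  have hcyc : IsCycle A (fun p : Fin (m + 3) => g p.val) := by
    refine ⟨by omega, ?_, ?_⟩
    · intro p q h
      exact Fin.ext (hginj p.val p.isLt q.val q.isLt h)
    · intro p
      exact hgarc p.val p.isLt
  have hzm : z ∈ Set.range (fun p : Fin (m + 3) => g p.val) :=
    ⟨⟨0, by omega⟩, g0⟩
  have := hlongest (m + 3) _ hcyc hzm
  omega
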